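/- Let a > 0, b ≥ 0, and let c₀ be the unique positive root of x(a x² + 2b) = 4. Let u be an axisymmetric stationary rotating profile on [0, c₀), i.e. u is differentiable on [0, c₀) and u'(r)/√(1 + u'(r)²) = r(a r² + 2b)/4 for all r ∈ [0, c₀). Then 2π ∫₀^{c₀} r² u'(r) dr < (4/3) π c₀³. -/

import Mathlib

open Set MeasureTheory

lemma aux_solve {y s : ℝ} (hs0 : 0 ≤ s) (hs1 : s < 1)
    (h : y / Real.sqrt (1 + y ^ 2) = s) : y = s / Real.sqrt (1 - s ^ 2) := by
  have h1 : (0:ℝ) < 1 + y ^ 2 := by positivity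
  have hsq : Real.sqrt (1 + y ^ 2) ^ 2 = 1 + y ^ 2 := Real.sq_sqrt h1.le
  have hpos : 0 < Real.sqrt (1 + y ^ 2) := Real.sqrt_pos.2 h1
  have hy : y = s * Real.sqrt (1 + y ^ 2) := by
    field_simp at h; linarith [h]
  have hy0 : 0 ≤ y := by rw [hy]; positivity
  have hysq : y ^ 2 * (1 - s ^ 2) = s ^ 2 := by
    have : y ^ 2 = s ^ 2 * (1 + y ^ 2) := by
      conv_lhs => rw [hy]
      rw [mul_pow, hsq]
    nlinarith
  have h2 : (0:ℝ) < 1 - s ^ 2 := by nlinarith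
  have hsq2 : Real.sqrt (1 - s ^ 2) ^ 2 = 1 - s ^ 2 := Real.sq_sqrt h2.le
  have hpos2 : 0 < Real.sqrt (1 - s ^ 2) := Real.sqrt_pos.2 h2
  have key : Real.sqrt (1 - s ^ 2) * y = s := by
    have hnn : 0 ≤ Real.sqrt (1 - s ^ 2) * y := by positivity
    have : (Real.sqrt (1 - s ^ 2) * y) ^ 2 = s ^ 2 := by
      rw [mul_pow, hsq2]; nlinarith
    nlinarith
  field_simp
  linarith [key]

lemma aux_mono {s t : ℝ} (hs0 : 0 ≤ s) (hst : s < t) (ht1 : t < 1) :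
    s / Real.sqrt (1 - s ^ 2) < t / Real.sqrt (1 - t ^ 2) := by
  have h2 : (0:ℝ) < 1 - t ^ 2 := by nlinarith
  have h1 : (0:ℝ) < 1 - s ^ 2 := by nlinarith
  have p2 : 0 < Real.sqrt (1 - t ^ 2) := Real.sqrt_pos.2 h2
  have p1 : 0 < Real.sqrt (1 - s ^ 2) := Real.sqrt_pos.2 h1
  have hle : Real.sqrt (1 - t ^ 2) ≤ Real.sqrt (1 - s ^ 2) := by
    apply Real.sqrt_le_sqrt; nlinarith
  calc s / Real.sqrt (1 - s ^ 2) ≤ s / Real.sqrt (1 - t ^ 2) := by gcongr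
    _ < t / Real.sqrt (1 - t ^ 2) := by gcongr

lemma aux_sphere (c : ℝ) (hc : 0 < c) :
    IntegrableOn (fun r => r ^ 3 / Real.sqrt (c ^ 2 - r ^ 2)) (Ioc 0 c) ∧
    ∫ r in Ioo (0:ℝ) c, r ^ 3 / Real.sqrt (c ^ 2 - r ^ 2) = 2 / 3 * c ^ 3 := by
  set F : ℝ → ℝ := fun r => -(1/3) * (r ^ 2 + 2 * c ^ 2) * Real.sqrt (c ^ 2 - r ^ 2) with hF
  have hFc : Continuous F := by fun_prop
  have hderiv : ∀ x ∈ Ioo (0:ℝ) c, HasDerivAt F (x ^ 3 / Real.sqrt (c ^ 2 - x ^ 2)) x := by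
    intro x hx
    have hx2 : 0 < c ^ 2 - x ^ 2 := by nlinarith [hx.1, hx.2]
    have hs : Real.sqrt (c ^ 2 - x ^ 2) ^ 2 = c ^ 2 - x ^ 2 := Real.sq_sqrt hx2.le
    have hs0 : 0 < Real.sqrt (c ^ 2 - x ^ 2) := Real.sqrt_pos.2 hx2
    have hinner : HasDerivAt (fun r : ℝ => c ^ 2 - r ^ 2) (0 - 2 * x) x := by
      simpa using ((hasDerivAt_pow 2 x).const_sub (c ^ 2))
    have hsqrt : HasDerivAt (fun r : ℝ => Real.sqrt (c ^ 2 - r ^ 2))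
        (1 / (2 * Real.sqrt (c ^ 2 - x ^ 2)) * (0 - 2 * x)) x :=
      (Real.hasDerivAt_sqrt hx2.ne').comp x hinner
    have hpoly : HasDerivAt (fun r : ℝ => -(1/3) * (r ^ 2 + 2 * c ^ 2)) (-(1/3) * (2 * x)) x := by
      simpa using ((hasDerivAt_pow 2 x).add_const (2 * c ^ 2)).const_mul (-(1/3) : ℝ)
    have := hpoly.mul hsqrt
    convert this using 1
    any_goals rfl
    field_simp
    linear_combination (4 * x) * hs
  have hnonneg : ∀ x ∈ Ioo (0:ℝ) c, 0 ≤ x ^ 3 / Real.sqrt (c ^ 2 - x ^ 2) := by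
    intro x hx; exact div_nonneg (pow_nonneg hx.1.le 3) (Real.sqrt_nonneg _)
  have hint : IntegrableOn (fun r => r ^ 3 / Real.sqrt (c ^ 2 - r ^ 2)) (Ioc 0 c) :=
    intervalIntegral.integrableOn_deriv_of_nonneg hFc.continuousOn hderiv hnonneg
  refine ⟨hint, ?_⟩
  have hii : IntervalIntegrable (fun r => r ^ 3 / Real.sqrt (c ^ 2 - r ^ 2)) volume 0 c := by
    rw [intervalIntegrable_iff_integrableOn_Ioc_of_le hc.le]; exact hint
  have heq := intervalIntegral.integral_eq_sub_of_hasDeriv_right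
    (a := 0) (b := c) (f := F) hFc.continuousOn
    (by intro x hx
        rw [min_eq_left hc.le, max_eq_right hc.le] at hx
        exact (hderiv x hx).hasDerivWithinAt) hii
  rw [intervalIntegral.integral_of_le hc.le, integral_Ioc_eq_integral_Ioo] at heq
  rw [heq, hF]
  have h1 : Real.sqrt (c ^ 2 - c ^ 2) = 0 := by simp
  have h2 : Real.sqrt (c ^ 2 - 0 ^ 2) = c := by
    simpa using Real.sqrt_sq hc.le
  simp only [h1, h2]; ring

/-- Corollary (volume bound): the enclosed volume `2π ∫₀^{c₀} r² u'(r) dr` of the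
lower half of an axisymmetric rotating closed drop of type I is finite and less than
`(4/3)π c₀³`. -/
theorem stmt_5 (a b c₀ : ℝ) (ha : 0 < a) (hb : 0 ≤ b)
    (hc₀ : 0 < c₀) (hroot : c₀ * (a * c₀ ^ 2 + 2 * b) = 4)
    (u u' : ℝ → ℝ)
    (hu : ∀ r ∈ Ico (0:ℝ) c₀, HasDerivAt u (u' r) r)
    (heq : ∀ r ∈ Ico (0:ℝ) c₀, u' r / Real.sqrt (1 + u' r ^ 2) = r * (a * r ^ 2 + 2 * b) / 4) :
    IntegrableOn (fun r => r ^ 2 * u' r) (Ioo 0 c₀) ∧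
      2 * Real.pi * ∫ r in Ioo (0:ℝ) c₀, r ^ 2 * u' r < 4 / 3 * Real.pi * c₀ ^ 3 := by
  set g : ℝ → ℝ := fun r => r * (a * r ^ 2 + 2 * b) / 4 with hgdef
  have hg1 : ∀ r ∈ Ico (0:ℝ) c₀, 0 ≤ g r ∧ g r < 1 := by
    intro r hr
    refine ⟨div_nonneg (mul_nonneg hr.1 (by positivity)) (by norm_num), ?_⟩
    have h4 : r * (a * r ^ 2 + 2 * b) < 4 := by
      have h3 : r ^ 3 < c₀ ^ 3 := by
        have := pow_lt_pow_left₀ hr.2 hr.1 (n := 3) (by norm_num)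
        simpa using this
      have hbr : b * r ≤ b * c₀ := mul_le_mul_of_nonneg_left hr.2.le hb
      nlinarith [mul_pos ha (sub_pos.2 h3), hbr]
    simp only [hgdef]; linarith
  have hu' : ∀ r ∈ Ico (0:ℝ) c₀, u' r = g r / Real.sqrt (1 - g r ^ 2) := fun r hr =>
    aux_solve (hg1 r hr).1 (hg1 r hr).2 (heq r hr)
  set G : ℝ → ℝ := fun r => r ^ 3 / Real.sqrt (c₀ ^ 2 - r ^ 2) with hGdef
  have hbound : ∀ r ∈ Ioo (0:ℝ) c₀, r ^ 2 * u' r < G r := by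
    intro r hr
    have hrI : r ∈ Ico (0:ℝ) c₀ := ⟨hr.1.le, hr.2⟩
    have hst : g r < r / c₀ := by
      rw [hgdef]
      rw [div_lt_div_iff₀ (by norm_num) hc₀]
      have h2 : r ^ 2 < c₀ ^ 2 := by nlinarith [hr.1, hr.2]
      have h4r : r * (c₀ * (a * c₀ ^ 2 + 2 * b)) = r * 4 := by rw [hroot]
      nlinarith [mul_pos (mul_pos hr.1 hc₀) (mul_pos ha (sub_pos.2 h2)), h4r]
    have ht1 : r / c₀ < 1 := (div_lt_one hc₀).2 hr.2
    have hmono := aux_mono (hg1 r hrI).1 hst ht1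
    rw [← hu' r hrI] at hmono
    have hx2 : 0 < c₀ ^ 2 - r ^ 2 := by nlinarith [hr.1, hr.2]
    have hid : (r / c₀) / Real.sqrt (1 - (r / c₀) ^ 2) = r / Real.sqrt (c₀ ^ 2 - r ^ 2) := by
      have h1 : 1 - (r / c₀) ^ 2 = (c₀ ^ 2 - r ^ 2) / c₀ ^ 2 := by field_simp
      rw [h1, Real.sqrt_div hx2.le, Real.sqrt_sq hc₀.le]
      have hs0 : 0 < Real.sqrt (c₀ ^ 2 - r ^ 2) := Real.sqrt_pos.2 hx2
      field_simp
    rw [hid] at hmono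
    have : r ^ 2 * u' r < r ^ 2 * (r / Real.sqrt (c₀ ^ 2 - r ^ 2)) := by
      apply mul_lt_mul_of_pos_left hmono (pow_pos hr.1 2)
    calc r ^ 2 * u' r < r ^ 2 * (r / Real.sqrt (c₀ ^ 2 - r ^ 2)) := this
      _ = G r := by rw [hGdef]; ring
  have hfnonneg : ∀ r ∈ Ioo (0:ℝ) c₀, 0 ≤ r ^ 2 * u' r := by
    intro r hr
    have hrI : r ∈ Ico (0:ℝ) c₀ := ⟨hr.1.le, hr.2⟩
    have : 0 ≤ u' r := by
      rw [hu' r hrI]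
      exact div_nonneg (hg1 r hrI).1 (Real.sqrt_nonneg _)
    positivity
  obtain ⟨hGint, hGval⟩ := aux_sphere c₀ hc₀
  have hGioo : IntegrableOn G (Ioo 0 c₀) := hGint.mono_set Ioo_subset_Ioc_self
  -- measurability
  have hφ : ContinuousOn (fun r => r ^ 2 * (g r / Real.sqrt (1 - g r ^ 2))) (Ioo 0 c₀) := by
    apply ContinuousOn.mul (by fun_prop)
    apply ContinuousOn.div (by fun_prop) (by fun_prop)
    intro r hr
    have := (hg1 r ⟨hr.1.le, hr.2⟩)
    have h2 : (0:ℝ) < 1 - g r ^ 2 := by nlinarith [this.1, this.2]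
    exact (Real.sqrt_pos.2 h2).ne'
  have hmeas : AEStronglyMeasurable (fun r => r ^ 2 * u' r)
      (volume.restrict (Ioo 0 c₀)) := by
    refine (hφ.aestronglyMeasurable measurableSet_Ioo).congr ?_
    filter_upwards [ae_restrict_mem measurableSet_Ioo] with r hr
    rw [hu' r ⟨hr.1.le, hr.2⟩]
  have hf_int : IntegrableOn (fun r => r ^ 2 * u' r) (Ioo 0 c₀) := by
    apply Integrable.mono' hGioo hmeas
    filter_upwards [ae_restrict_mem measurableSet_Ioo] with r hr
    rw [Real.norm_eq_abs, abs_of_nonneg (hfnonneg r hr)]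
    exact (hbound r hr).le
  refine ⟨hf_int, ?_⟩
  have hlt : ∫ r in Ioo (0:ℝ) c₀, r ^ 2 * u' r < ∫ r in Ioo (0:ℝ) c₀, G r := by
    have hsub : IntegrableOn (fun r => G r - r ^ 2 * u' r) (Ioo 0 c₀) := hGioo.sub hf_int
    have hpos : 0 < ∫ r in Ioo (0:ℝ) c₀, (G r - r ^ 2 * u' r) := by
      rw [setIntegral_pos_iff_support_of_nonneg_ae ?_ hsub]
      · refine lt_of_lt_of_le (b := volume (Ioo (0:ℝ) c₀)) ?_ (measure_mono ?_)
        · rw [Real.volume_Ioo]; exact ENNReal.ofReal_pos.2 (by linarith)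
        · intro r hr
          refine ⟨?_, hr⟩
          simp only [Function.mem_support]
          have := hbound r hr
          intro hzero
          linarith
      · filter_upwards [ae_restrict_mem measurableSet_Ioo] with r hr
        have := hbound r hr
        simp only [Pi.zero_apply]
        linarith
    rw [integral_sub hGioo hf_int] at hpos
    linarith
  rw [hGval] at hlt
  nlinarith [Real.pi_pos, hlt]
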